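/- For every integer u ≥ 2 and every positive integer n, |D_{u,n}| = d_{u, un − (u−1)}, where d_{u,·} is defined by d_{u,m} = 1 for 1 ≤ m ≤ 2u−1 and d_{u,m} = d_{u,m−u} + d_{u,m−2u+1} for m ≥ 2u. -/

import Mathlib

/-- The set of the first `n` positive integers not divisible by `u`. -/
def Gset (u n : ℕ) : Finset ℕ := (Finset.Icc 1 n).image fun k => (u * k - 1) / (u - 1)

/-- The Schreier subsets of `Gset u n` containing its largest element `⌊(un-1)/(u-1)⌋`. -/
def Dset (u n : ℕ) : Finset (Finset ℕ) :=
  (Gset u n).powerset.filter fun F => (u * n - 1) / (u - 1) ∈ F ∧ ∀ x ∈ F, F.card ≤ x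

/-- The parent sequence: `dseq u m = 1` for `1 ≤ m ≤ 2u - 1` and
`dseq u m = dseq u (m - u) + dseq u (m - (2u - 1))` for `m ≥ 2u`
(the clause `u < 2` is only for termination; all statements assume `u ≥ 2`). -/
def dseq (u : ℕ) : ℕ → ℕ
  | n =>
    if _h : n ≤ 2 * u - 1 ∨ u < 2 then 1
    else dseq u (n - u) + dseq u (n - (2 * u - 1))
  termination_by n => n
  decreasing_by all_goals omega

namespace DP

def g (u k : ℕ) : ℕ := (u * k - 1) / (u - 1)

lemma g_eq {u : ℕ} (hu : 2 ≤ u) (k : ℕ) : g u k = k + (k - 1) / (u - 1) := by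
  unfold g
  rcases k with _ | k
  · simp
  · have hle : k + 1 ≤ u * (k + 1) := Nat.le_mul_of_pos_left _ (by omega)
    have h2 : (u - 1) * (k + 1) = u * (k + 1) - (k + 1) := by rw [Nat.sub_mul, one_mul]
    have h1 : u * (k + 1) - 1 = (u - 1) * (k + 1) + k := by omega
    rw [h1, Nat.mul_add_div (by omega)]
    simp

lemma g_ge {u : ℕ} (hu : 2 ≤ u) (k : ℕ) : k ≤ g u k := by
  rw [g_eq hu]; exact Nat.le_add_right _ _

lemma g_mono {u : ℕ} (hu : 2 ≤ u) {k l : ℕ} (h : k < l) : g u k < g u l := by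
  rw [g_eq hu, g_eq hu]
  have : (k - 1) / (u - 1) ≤ (l - 1) / (u - 1) := Nat.div_le_div_right (by omega)
  omega

lemma g_le_g {u : ℕ} (hu : 2 ≤ u) {k l : ℕ} (h : k ≤ l) : g u k ≤ g u l := by
  rcases eq_or_lt_of_le h with rfl | h
  · exact le_rfl
  · exact (g_mono hu h).le

lemma g_add {u : ℕ} (hu : 2 ≤ u) {k : ℕ} (hk : 1 ≤ k) : g u (k + (u - 1)) = g u k + u := by
  rw [g_eq hu, g_eq hu]
  have h : (k + (u - 1) - 1) / (u - 1) = (k - 1) / (u - 1) + 1 := by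
    have e : k + (u - 1) - 1 = (k - 1) + (u - 1) := by omega
    rw [e, Nat.add_div_right _ (by omega)]
  omega

lemma g_small {u : ℕ} (hu : 2 ≤ u) {k : ℕ} (hk : k ≤ u - 1) : g u k = k := by
  rw [g_eq hu, Nat.div_eq_of_lt (by omega)]; omega

lemma mem_Gset {u N x : ℕ} : x ∈ Gset u N ↔ ∃ k, 1 ≤ k ∧ k ≤ N ∧ g u k = x := by
  simp [Gset, g, Finset.mem_image, Finset.mem_Icc, and_assoc]

lemma self_mem_Gset {u N : ℕ} (hN : 1 ≤ N) : g u N ∈ Gset u N :=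
  mem_Gset.2 ⟨N, hN, le_rfl, rfl⟩

lemma le_of_mem_Gset {u N x : ℕ} (hu : 2 ≤ u) (hx : x ∈ Gset u N) : x ≤ g u N := by
  obtain ⟨k, hk1, hk2, rfl⟩ := mem_Gset.1 hx
  exact g_le_g hu hk2

lemma Gset_subset {u M N : ℕ} (h : M ≤ N) : Gset u M ⊆ Gset u N := by
  intro x hx
  obtain ⟨k, hk1, hk2, rfl⟩ := mem_Gset.1 hx
  exact mem_Gset.2 ⟨k, hk1, hk2.trans h, rfl⟩

lemma mem_Gset_pred {u N x : ℕ} (hu : 2 ≤ u) (hx : x ∈ Gset u N) (hne : x ≠ g u N) :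
    x ∈ Gset u (N - 1) := by
  obtain ⟨k, hk1, hk2, rfl⟩ := mem_Gset.1 hx
  refine mem_Gset.2 ⟨k, hk1, ?_, rfl⟩
  rcases eq_or_lt_of_le hk2 with rfl | h
  · exact absurd rfl hne
  · omega

def Bset (u N r : ℕ) : Finset (Finset ℕ) :=
  (Gset u N).powerset.filter fun F => g u N ∈ F ∧ ∀ x ∈ F, F.card + r ≤ x

lemma mem_Bset {u N r : ℕ} {F : Finset ℕ} :
    F ∈ Bset u N r ↔ F ⊆ Gset u N ∧ g u N ∈ F ∧ ∀ x ∈ F, F.card + r ≤ x := by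
  simp [Bset, Finset.mem_filter, Finset.mem_powerset, and_assoc]

lemma Bset_card_base {u N r : ℕ} (hu : 2 ≤ u) (h1 : r + 1 ≤ N) (h2 : N ≤ r + 2)
    (h3 : N ≤ u) : (Bset u N r).card = 1 := by
  have hset : Bset u N r = {{g u N}} := by
    ext F
    rw [mem_Bset, Finset.mem_singleton]
    constructor
    · rintro ⟨hsub, hmem, hcond⟩
      refine Finset.eq_singleton_iff_unique_mem.2 ⟨hmem, fun y hy => ?_⟩
      by_contra hne
      obtain ⟨k, hk1, hk2, hky⟩ := mem_Gset.1 (hsub hy)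
      have hkN : k ≠ N := by rintro rfl; exact hne hky.symm
      have hsm : g u k = k := g_small hu (by omega)
      have hky2 : y = k := by omega
      have hcard : 2 ≤ F.card := by
        have : ({y, g u N} : Finset ℕ) ⊆ F := by
          intro z hz
          simp at hz
          rcases hz with rfl | rfl <;> assumption
        have := Finset.card_le_card this
        rwa [Finset.card_pair hne] at this
      have := hcond y hy
      omega
    · rintro rfl
      refine ⟨Finset.singleton_subset_iff.2 (self_mem_Gset (by omega)), Finset.mem_singleton_self _, ?_⟩
      intro x hx
      rw [Finset.mem_singleton] at hx
      subst hx
      have := g_ge hu N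
      simp only [Finset.card_singleton]
      omega
  rw [hset, Finset.card_singleton]


lemma Bset_rec1 {u N r : ℕ} (hu : 2 ≤ u) (hN : r + 2 ≤ N) :
    (Bset u N r).card = (Bset u (N - 1) r).card + (Bset u (N - 1) (r + 1)).card := by
  have hab : g u (N - 1) < g u N := g_mono hu (by omega)
  have hN1 : 1 ≤ N - 1 := by omega
  have h2 : ((Bset u N r).filter fun F => g u (N - 1) ∈ F).card
      = (Bset u (N - 1) (r + 1)).card := by
    refine Finset.card_nbij' (fun F => F.erase (g u N)) (fun T => insert (g u N) T)
      ?_ ?_ ?_ ?_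
    · intro F hF
      dsimp only
      rw [Finset.mem_coe, Finset.mem_filter] at hF
      obtain ⟨hF, haF⟩ := hF
      rw [mem_Bset] at hF
      obtain ⟨hsub, hb, hcond⟩ := hF
      have hcard : (F.erase (g u N)).card = F.card - 1 := Finset.card_erase_of_mem hb
      have hpos : 1 ≤ F.card := Finset.card_pos.2 ⟨_, hb⟩
      refine mem_Bset.2 ⟨?_, ?_, ?_⟩
      · intro x hx
        rw [Finset.mem_erase] at hx
        exact mem_Gset_pred hu (hsub hx.2) hx.1
      · exact Finset.mem_erase.2 ⟨hab.ne, haF⟩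
      · intro x hx
        rw [Finset.mem_erase] at hx
        have := hcond x hx.2
        omega
    · intro T hT
      dsimp only
      rw [Finset.mem_coe, mem_Bset] at hT
      obtain ⟨hsub, ha, hcond⟩ := hT
      have hbT : g u N ∉ T := fun h => absurd (le_of_mem_Gset hu (hsub h)) (by omega)
      have hcard : (insert (g u N) T).card = T.card + 1 := Finset.card_insert_of_notMem hbT
      rw [Finset.mem_coe, Finset.mem_filter]
      constructor
      · refine mem_Bset.2 ⟨?_, Finset.mem_insert_self _ _, ?_⟩
        · exact Finset.insert_subset (self_mem_Gset (by omega))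
            (hsub.trans (Gset_subset (by omega)))
        · intro x hx
          rcases Finset.mem_insert.1 hx with rfl | hx
          · have := hcond _ ha
            omega
          · have := hcond x hx
            omega
      · exact Finset.mem_insert_of_mem ha
    · intro F hF
      dsimp only
      rw [Finset.mem_coe, Finset.mem_filter] at hF
      have hb : g u N ∈ F := (mem_Bset.1 hF.1).2.1
      exact Finset.insert_erase hb
    · intro T hT
      dsimp only
      rw [Finset.mem_coe, mem_Bset] at hT
      obtain ⟨hsub, ha, hcond⟩ := hT
      have hbT : g u N ∉ T := fun h => absurd (le_of_mem_Gset hu (hsub h)) (by omega)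
      exact Finset.erase_insert hbT
  have h1 : ((Bset u N r).filter fun F => g u (N - 1) ∉ F).card
      = (Bset u (N - 1) r).card := by
    refine Finset.card_nbij' (fun F => insert (g u (N - 1)) (F.erase (g u N)))
      (fun T => insert (g u N) (T.erase (g u (N - 1)))) ?_ ?_ ?_ ?_
    · intro F hF
      dsimp only
      rw [Finset.mem_coe, Finset.mem_filter] at hF
      obtain ⟨hF, hna⟩ := hF
      rw [mem_Bset] at hF
      obtain ⟨hsub, hb, hcond⟩ := hF
      have hpos : 1 ≤ F.card := Finset.card_pos.2 ⟨_, hb⟩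
      have hnae : g u (N - 1) ∉ F.erase (g u N) := fun h => hna (Finset.mem_of_mem_erase h)
      have hcard : (insert (g u (N - 1)) (F.erase (g u N))).card = F.card := by
        rw [Finset.card_insert_of_notMem hnae, Finset.card_erase_of_mem hb]
        omega
      have hage : F.card + r ≤ g u (N - 1) := by
        by_cases hc : F.card ≤ 1
        · have := g_ge hu (N - 1)
          omega
        · have hc2 : 1 < F.card := by omega
          obtain ⟨x0, hx0, hx0b⟩ := Finset.exists_mem_ne hc2 (g u N)
          have hx0le : x0 ≤ g u (N - 1) := le_of_mem_Gset hu (mem_Gset_pred hu (hsub hx0) hx0b)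
          have := hcond x0 hx0
          omega
      refine mem_Bset.2 ⟨?_, Finset.mem_insert_self _ _, ?_⟩
      · refine Finset.insert_subset (self_mem_Gset hN1) ?_
        intro x hx
        rw [Finset.mem_erase] at hx
        exact mem_Gset_pred hu (hsub hx.2) hx.1
      · intro x hx
        rcases Finset.mem_insert.1 hx with rfl | hx
        · omega
        · rw [Finset.mem_erase] at hx
          have := hcond x hx.2
          omega
    · intro T hT
      dsimp only
      rw [Finset.mem_coe, mem_Bset] at hT
      obtain ⟨hsub, ha, hcond⟩ := hT
      have hpos : 1 ≤ T.card := Finset.card_pos.2 ⟨_, ha⟩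
      have hbT : g u N ∉ T.erase (g u (N - 1)) := fun h =>
        absurd (le_of_mem_Gset hu (hsub (Finset.mem_of_mem_erase h))) (by omega)
      have hcard : (insert (g u N) (T.erase (g u (N - 1)))).card = T.card := by
        rw [Finset.card_insert_of_notMem hbT, Finset.card_erase_of_mem ha]
        omega
      rw [Finset.mem_coe, Finset.mem_filter]
      constructor
      · refine mem_Bset.2 ⟨?_, Finset.mem_insert_self _ _, ?_⟩
        · refine Finset.insert_subset (self_mem_Gset (by omega)) ?_
          intro x hx
          exact Gset_subset (by omega) (hsub (Finset.mem_of_mem_erase hx))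
        · intro x hx
          rcases Finset.mem_insert.1 hx with rfl | hx
          · have := hcond _ ha
            omega
          · have := hcond x (Finset.mem_of_mem_erase hx)
            omega
      · intro h
        rcases Finset.mem_insert.1 h with h | h
        · exact absurd h (by omega)
        · exact (Finset.notMem_erase _ _) h
    · intro F hF
      dsimp only
      rw [Finset.mem_coe, Finset.mem_filter] at hF
      obtain ⟨hF, hna⟩ := hF
      have hb : g u N ∈ F := (mem_Bset.1 hF).2.1
      have hnae : g u (N - 1) ∉ F.erase (g u N) := fun h => hna (Finset.mem_of_mem_erase h)
      rw [Finset.erase_insert hnae, Finset.insert_erase hb]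
    · intro T hT
      dsimp only
      rw [Finset.mem_coe, mem_Bset] at hT
      obtain ⟨hsub, ha, hcond⟩ := hT
      have hbT : g u N ∉ T.erase (g u (N - 1)) := fun h =>
        absurd (le_of_mem_Gset hu (hsub (Finset.mem_of_mem_erase h))) (by omega)
      rw [Finset.erase_insert hbT, Finset.insert_erase ha]
  have h3 := Finset.card_filter_add_card_filter_not
    (s := Bset u N r) (p := fun F => g u (N - 1) ∈ F)
  omega


lemma Bset_shift {u N : ℕ} (hu : 2 ≤ u) (hN : u ≤ N) :
    (Bset u N u).card = (Bset u (N - (u - 1)) 0).card := by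
  have hgN : g u N = g u (N - (u - 1)) + u := by
    have h := g_add hu (k := N - (u - 1)) (by omega)
    rw [show N - (u - 1) + (u - 1) = N by omega] at h
    exact h
  refine Finset.card_nbij' (fun F => F.image (· - u)) (fun T => T.image (· + u)) ?_ ?_ ?_ ?_
  · intro F hF
    dsimp only
    rw [Finset.mem_coe, mem_Bset] at hF
    obtain ⟨hsub, hb, hcond⟩ := hF
    have hpos : 1 ≤ F.card := Finset.card_pos.2 ⟨_, hb⟩
    have hbig : ∀ x ∈ F, u + 1 ≤ x := fun x hx => by have := hcond x hx; omega
    have hinj : Set.InjOn (· - u) F := fun x hx y hy h => by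
      have h1 := hbig x (Finset.mem_coe.1 hx)
      have h2 := hbig y (Finset.mem_coe.1 hy)
      dsimp at h
      omega
    have hcard : (F.image (· - u)).card = F.card := Finset.card_image_of_injOn hinj
    refine mem_Bset.2 ⟨?_, ?_, ?_⟩
    · intro y hy
      obtain ⟨x, hx, rfl⟩ := Finset.mem_image.1 hy
      obtain ⟨k, hk1, hk2, rfl⟩ := mem_Gset.1 (hsub hx)
      have hku : u ≤ k := by
        by_contra hlt
        have hsm : g u k = k := g_small hu (by omega)
        have := hbig _ hx
        omega
      have h := g_add hu (k := k - (u - 1)) (by omega)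
      rw [show k - (u - 1) + (u - 1) = k by omega] at h
      exact mem_Gset.2 ⟨k - (u - 1), by omega, by omega, by omega⟩
    · exact Finset.mem_image.2 ⟨g u N, hb, by omega⟩
    · intro y hy
      obtain ⟨x, hx, rfl⟩ := Finset.mem_image.1 hy
      have := hcond x hx
      try dsimp
      omega
  · intro T hT
    dsimp only
    rw [Finset.mem_coe, mem_Bset] at hT
    obtain ⟨hsub, hb, hcond⟩ := hT
    have hcard : (T.image (· + u)).card = T.card :=
      Finset.card_image_of_injective _ (add_left_injective u)
    refine mem_Bset.2 ⟨?_, ?_, ?_⟩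
    · intro y hy
      obtain ⟨x, hx, rfl⟩ := Finset.mem_image.1 hy
      obtain ⟨k, hk1, hk2, rfl⟩ := mem_Gset.1 (hsub hx)
      have h := g_add hu (k := k) hk1
      exact mem_Gset.2 ⟨k + (u - 1), by omega, by omega, by omega⟩
    · exact Finset.mem_image.2 ⟨_, hb, by omega⟩
    · intro y hy
      obtain ⟨x, hx, rfl⟩ := Finset.mem_image.1 hy
      have := hcond x hx
      try dsimp
      omega
  · intro F hF
    dsimp only
    rw [Finset.mem_coe, mem_Bset] at hF
    obtain ⟨hsub, hb, hcond⟩ := hF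
    rw [Finset.image_image]
    rw [Finset.image_congr (g := id) ?_, Finset.image_id]
    intro x hx
    have := hcond x (Finset.mem_coe.1 hx)
    simp only [Function.comp_apply, id_eq]
    omega
  · intro T hT
    dsimp only
    rw [Finset.image_image]
    rw [Finset.image_congr (g := id) ?_, Finset.image_id]
    intro x hx
    simp only [Function.comp_apply, id_eq]
    omega


lemma Bset_card_eq {u : ℕ} (hu : 2 ≤ u) :
    ∀ m, 1 ≤ m → ∀ N r, r + 1 ≤ u → u * N = m + (u - 1) * (r + 1) →
      (Bset u N r).card = dseq u m := by
  intro m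
  induction m using Nat.strong_induction_on with
  | _ m ih =>
    intro hm N r hr hNr
    have key : u * N + r + 1 = m + u * r + u := by
      have e1 : (u - 1) * (r + 1) = u * (r + 1) - (r + 1) := by rw [Nat.sub_mul, one_mul]
      have e2 : u * (r + 1) = u * r + u := by ring
      have e3 : r + 1 ≤ u * (r + 1) := Nat.le_mul_of_pos_left _ (by omega)
      omega
    by_cases hbase : m ≤ 2 * u - 1
    · rw [dseq, dif_pos (Or.inl hbase)]
      have hn1 : r + 1 ≤ N := by
        by_contra h
        have : u * N ≤ u * r := Nat.mul_le_mul_left u (by omega)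
        omega
      have hn2 : N ≤ r + 2 := by
        by_contra h
        have h3 : u * (r + 3) ≤ u * N := Nat.mul_le_mul_left u (by omega)
        have e : u * (r + 3) = u * r + 3 * u := by ring
        omega
      have hn3 : N ≤ u := by
        rcases (by omega : N = r + 1 ∨ N = r + 2) with rfl | rfl
        · omega
        · have e : u * (r + 2) = u * r + 2 * u := by ring
          omega
      exact Bset_card_base hu hn1 hn2 hn3
    · rw [dseq, dif_neg (by omega)]
      have hNrec : r + 2 ≤ N := by
        by_contra h
        have h2 : u * N ≤ u * (r + 1) := Nat.mul_le_mul_left u (by omega)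
        have e : u * (r + 1) = u * r + u := by ring
        omega
      rw [Bset_rec1 hu hNrec]
      have hmul : u * (N - 1) + u = u * N := by
        have e : u * (N - 1 + 1) = u * (N - 1) + u := by ring
        rw [show N - 1 + 1 = N by omega] at e
        omega
      have ha : (Bset u (N - 1) r).card = dseq u (m - u) := by
        apply ih (m - u) (by omega) (by omega) (N - 1) r hr
        omega
      rw [ha]
      by_cases hru : r + 1 = u
      · have hNu : u + 1 ≤ N := by
          by_contra h
          have h2 : u * N ≤ u * u := Nat.mul_le_mul_left u (by omega)
          have h3 : u * r + u = u * u := by rw [← hru]; ring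
          omega
        have hshift : (Bset u (N - 1) (r + 1)).card = (Bset u (N - 1 - (u - 1)) 0).card := by
          rw [hru]
          exact Bset_shift hu (by omega)
        have hb : (Bset u (N - 1 - (u - 1)) 0).card = dseq u (m - (2 * u - 1)) := by
          apply ih (m - (2 * u - 1)) (by omega) (by omega) _ 0 (by omega)
          have e2 : u * (N - u) + u * u = u * N := by
            have e : u * (N - u + u) = u * (N - u) + u * u := by ring
            rw [show N - u + u = N by omega] at e
            omega
          have e3 : u * r + u = u * u := by rw [← hru]; ring
          have e4 : (u - 1) * 1 = u - 1 := by ring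
          rw [show N - 1 - (u - 1) = N - u by omega]
          omega
        rw [hshift, hb]
      · have hb : (Bset u (N - 1) (r + 1)).card = dseq u (m - (2 * u - 1)) := by
          apply ih (m - (2 * u - 1)) (by omega) (by omega) (N - 1) (r + 1) (by omega)
          have e : u * (r + 2) = u * r + 2 * u := by ring
          have e0 : (u - 1) * (r + 1 + 1) = (u - 1) * (r + 2) := by ring
          have e1 : (u - 1) * (r + 2) = u * (r + 2) - (r + 2) := by rw [Nat.sub_mul, one_mul]
          have e3 : r + 2 ≤ u * (r + 2) := Nat.le_mul_of_pos_left _ (by omega)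
          omega
        rw [hb]

end DP

theorem card_Dset_eq_dseq (u n : ℕ) (hu : 2 ≤ u) (hn : 1 ≤ n) :
    (Dset u n).card = dseq u (u * n - (u - 1)) := by
  have hD : Dset u n = DP.Bset u n 0 := by
    simp only [Dset, DP.Bset, DP.g, add_zero]
  have hun : u ≤ u * n := Nat.le_mul_of_pos_right u (by omega)
  rw [hD]
  refine DP.Bset_card_eq hu (u * n - (u - 1)) (by omega) n 0 (by omega) ?_
  have e : (u - 1) * (0 + 1) = u - 1 := by ring
  omega
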